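/- Define h : ℝ → ℝ by h(x) = log((x+2)(2−x)/x²) for 0 < x ≤ 1 and h(x) = 0 otherwise. Then h is locally integrable but is not of bounded mean oscillation on ℝ: sup_I (1/|I|) ∫_I |h(x) − Avg_I h| dx = ∞, the supremum taken over all bounded intervals I of positive length; equivalently, for every C > 0 there exists a bounded interval I of positive length with (1/|I|) ∫_I |h(x) − Avg_I h| dx > C. (This is the core of the paper's Proposition 5.1, which shows that for n = 1 there exist compactly supported f, g ∈ L^∞ and an order-zero amplitude such that the bilinear Fourier integral operator with phases φ1(x,ξ) = xξ + |ξ| and φ2(x,η) = xη applied to (f,g) fails to lie in BMO.) -/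

import Mathlib

open MeasureTheory
open scoped ENNReal NNReal

noncomputable section

/-- The function `h(x) = log((x+2)(2-x)/x²)` for `0 < x ≤ 1`, extended by `0`:
the imaginary part (up to a constant) of the model one-dimensional bilinear FIO
output appearing in Proposition 5.1 of the paper. -/
def hfun (x : ℝ) : ℝ :=
  if 0 < x ∧ x ≤ 1 then Real.log ((x + 2) * (2 - x) / x ^ 2) else 0

lemma neg_log_integrableOn : IntegrableOn (fun x : ℝ => -Real.log x) (Set.Ioc 0 1) volume := by
  have hcont : ContinuousOn (fun x : ℝ => x - x * Real.log x) (Set.Icc 0 1) :=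
    (continuous_id.sub Real.continuous_mul_log).continuousOn
  have hderiv : ∀ x ∈ Set.Ioo (0:ℝ) 1,
      HasDerivAt (fun x : ℝ => x - x * Real.log x) (-Real.log x) x := by
    intro x hx
    have := (hasDerivAt_id x).sub (Real.hasDerivAt_mul_log (ne_of_gt hx.1))
    exact this.congr_deriv (by ring)
  have hpos : ∀ x ∈ Set.Ioo (0:ℝ) 1, 0 ≤ -Real.log x := by
    intro x hx
    simpa using Real.log_nonpos hx.1.le hx.2.le
  exact intervalIntegral.integrableOn_deriv_of_nonneg hcont hderiv hpos

lemma log_integrableOn : IntegrableOn Real.log (Set.Ioc 0 1) volume := by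
  have h := neg_log_integrableOn.neg
  simp only [Pi.neg_def, neg_neg] at h
  exact h

lemma hfun_eq_indicator :
    hfun = Set.indicator (Set.Ioc 0 1)
      (fun x => Real.log ((x + 2) * (2 - x) / x ^ 2)) := by
  funext x
  simp [hfun, Set.indicator, Set.mem_Ioc]

lemma hfun_integrable : Integrable hfun volume := by
  rw [hfun_eq_indicator, integrable_indicator_iff measurableSet_Ioc]
  have h1 : IntegrableOn (fun x : ℝ => Real.log ((x + 2) * (2 - x))) (Set.Ioc 0 1) volume := by
    apply (ContinuousOn.integrableOn_compact isCompact_Icc ?_).mono_set Set.Ioc_subset_Icc_self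
    apply ContinuousOn.log (by fun_prop)
    intro x hx
    have h1 : (0:ℝ) < x + 2 := by linarith [hx.1]
    have h2 : (0:ℝ) < 2 - x := by linarith [hx.2]
    positivity
  have h2 : IntegrableOn (fun x : ℝ => 2 * Real.log x) (Set.Ioc 0 1) volume :=
    log_integrableOn.const_mul 2
  have h3 : IntegrableOn
      (fun x : ℝ => Real.log ((x + 2) * (2 - x)) - 2 * Real.log x) (Set.Ioc 0 1) volume :=
    h1.sub h2
  apply h3.congr_fun ?_ measurableSet_Ioc
  intro x hx
  have hx0 : x ≠ 0 := ne_of_gt hx.1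
  have h1 : (0:ℝ) < x + 2 := by linarith [hx.1]
  have h2 : (0:ℝ) < 2 - x := by linarith [hx.2]
  show Real.log ((x + 2) * (2 - x)) - 2 * Real.log x
      = Real.log ((x + 2) * (2 - x) / x ^ 2)
  rw [Real.log_div (by positivity) (by positivity), Real.log_pow]
  push_cast
  ring

lemma hfun_nonneg (x : ℝ) : 0 ≤ hfun x := by
  unfold hfun
  split_ifs with h
  · apply Real.log_nonneg
    rw [le_div_iff₀ (pow_pos h.1 2)]
    nlinarith [h.1, h.2, mul_nonneg (by nlinarith [h.1, h.2] : (0:ℝ) ≤ 3 - x ^ 2) (sq_nonneg x)]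
  · exact le_rfl

/-- **Core of Proposition 5.1 (failure of the `L^∞ × L^∞ → BMO` endpoint in
dimension one).**  The function `hfun` is locally integrable but has infinite BMO
seminorm: its mean oscillation over bounded intervals is unbounded. -/
theorem hfun_locallyIntegrable_not_BMO :
    LocallyIntegrable hfun volume ∧
      ∀ C : ℝ, 0 < C → ∃ a b : ℝ, a < b ∧
        (b - a)⁻¹ * ∫ x in Set.Ioo a b, |hfun x - ⨍ y in Set.Ioo a b, hfun y| > C := by
  constructor
  · exact hfun_integrable.locallyIntegrable
  intro C hC
  set ε : ℝ := Real.exp (-(2 * C)) with hεdef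
  have hε0 : 0 < ε := Real.exp_pos _
  have hε1 : ε ≤ 1 := Real.exp_le_one_iff.mpr (by linarith)
  have hlogε : Real.log ε = -(2 * C) := Real.log_exp _
  refine ⟨-ε, ε, by linarith, ?_⟩
  set I : Set ℝ := Set.Ioo (-ε) ε with hI
  set A : ℝ := ⨍ y in I, hfun y with hA
  have hvol : (volume I).toReal = 2 * ε := by
    rw [hI, Real.volume_Ioo]
    rw [ENNReal.toReal_ofReal (by linarith)]
    ring
  have hIint : IntegrableOn hfun I volume := hfun_integrable.integrableOn
  -- lower bound on the integral of hfun over I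
  have key : 2 * ε * (1 + 2 * C) ≤ ∫ x in I, hfun x := by
    have sub1 : ∫ x in Set.Ioo (0:ℝ) ε, hfun x ≤ ∫ x in I, hfun x := by
      apply setIntegral_mono_set hIint
      · exact Filter.Eventually.of_forall fun x => hfun_nonneg x
      · apply HasSubset.Subset.eventuallyLE
        intro x hx
        exact ⟨by linarith [hx.1], hx.2⟩
    have hlogI : IntegrableOn (fun x : ℝ => -(2 * Real.log x)) (Set.Ioo 0 ε) volume := by
      apply IntegrableOn.mono_set ((log_integrableOn.const_mul 2).neg)
      intro x hx
      exact ⟨hx.1, by linarith [hx.2]⟩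
    have sub2 : ∫ x in Set.Ioo (0:ℝ) ε, -(2 * Real.log x) ≤ ∫ x in Set.Ioo (0:ℝ) ε, hfun x := by
      apply setIntegral_mono_on hlogI
        (hIint.mono_set (fun x hx => ⟨by linarith [hx.1], by linarith [hx.2]⟩))
        measurableSet_Ioo
      intro x hx
      have hx0 : 0 < x := hx.1
      have hx1 : x ≤ 1 := by linarith [hx.2]
      have : hfun x = Real.log ((x + 2) * (2 - x) / x ^ 2) := by
        simp [hfun, hx0, hx1]
      rw [this]
      have e1 : -(2 * Real.log x) = Real.log ((x ^ 2)⁻¹) := by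
        rw [Real.log_inv, Real.log_pow]
        push_cast; ring
      rw [e1]
      apply Real.log_le_log (by positivity)
      rw [inv_eq_one_div, div_le_div_iff₀ (by positivity) (by positivity)]
      nlinarith [mul_nonneg (by nlinarith : (0:ℝ) ≤ 3 - x ^ 2) (sq_nonneg x), sq_nonneg x]
    have calc1 : ∫ x in Set.Ioo (0:ℝ) ε, -(2 * Real.log x) = 2 * ε * (1 + 2 * C) := by
      have hii : IntervalIntegrable (fun x : ℝ => -(2 * Real.log x)) volume 0 ε := by
        rw [intervalIntegrable_iff_integrableOn_Ioc_of_le hε0.le]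
        apply IntegrableOn.mono_set ((log_integrableOn.const_mul 2).neg)
        intro x hx
        exact ⟨hx.1, by linarith [hx.2]⟩
      have hcont : ContinuousOn (fun x : ℝ => 2 * (x - x * Real.log x)) (Set.Icc 0 ε) :=
        (continuous_const.mul (continuous_id.sub Real.continuous_mul_log)).continuousOn
      have hderiv : ∀ x ∈ Set.Ioo (0:ℝ) ε,
          HasDerivWithinAt (fun x : ℝ => 2 * (x - x * Real.log x)) (-(2 * Real.log x))
            (Set.Ioi x) x := by
        intro x hx
        have h := (((hasDerivAt_id x).sub (Real.hasDerivAt_mul_log (ne_of_gt hx.1))).const_mul 2)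
        have h2 : HasDerivAt (fun x : ℝ => 2 * (x - x * Real.log x)) (-(2 * Real.log x)) x := by
          exact h.congr_deriv (by ring)
        exact h2.hasDerivWithinAt
      have := intervalIntegral.integral_eq_sub_of_hasDeriv_right_of_le hε0.le hcont hderiv hii
      rw [intervalIntegral.integral_of_le hε0.le] at this
      rw [← MeasureTheory.integral_Ioc_eq_integral_Ioo, this, hlogε]
      simp
      ring
    linarith
  have hApos : 1 + 2 * C ≤ A := by
    rw [hA, setAverage_eq, measureReal_def, hvol, smul_eq_mul]
    have h := mul_le_mul_of_nonneg_left key (by positivity : (0:ℝ) ≤ (2 * ε)⁻¹)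
    calc 1 + 2 * C = (2 * ε)⁻¹ * (2 * ε * (1 + 2 * C)) := by field_simp
      _ ≤ (2 * ε)⁻¹ * ∫ x in I, hfun x := h
  -- lower bound on the oscillation integral
  have oscint : IntegrableOn (fun x => |hfun x - A|) I volume :=
    (hIint.sub ((integrableOn_const_iff).mpr (Or.inr (by rw [hI, Real.volume_Ioo]; exact ENNReal.ofReal_lt_top)))).abs
  have osc : ε * A ≤ ∫ x in I, |hfun x - A| := by
    have sub1 : ∫ x in Set.Ioo (-ε) 0, |hfun x - A| ≤ ∫ x in I, |hfun x - A| := by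
      apply setIntegral_mono_set oscint
      · exact Filter.Eventually.of_forall fun x => abs_nonneg _
      · apply HasSubset.Subset.eventuallyLE
        intro x hx
        exact ⟨hx.1, by linarith [hx.2]⟩
    have calc2 : ∫ x in Set.Ioo (-ε) 0, |hfun x - A| = ε * A := by
      have : ∀ x ∈ Set.Ioo (-ε) (0:ℝ), |hfun x - A| = A := by
        intro x hx
        have h0 : hfun x = 0 := if_neg (by rintro ⟨h1, _⟩; linarith [hx.2])
        rw [h0, zero_sub, abs_neg, abs_of_nonneg (by linarith)]
      rw [setIntegral_congr_fun measurableSet_Ioo this]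
      rw [setIntegral_const, measureReal_def, Real.volume_Ioo, smul_eq_mul]
      rw [ENNReal.toReal_ofReal (by linarith)]
      ring
    linarith
  have hfinal : (ε - -ε)⁻¹ * ∫ x in I, |hfun x - A| > C := by
    have h2ε : ε - -ε = 2 * ε := by ring
    rw [h2ε]
    have : (2 * ε)⁻¹ * (ε * A) ≤ (2 * ε)⁻¹ * ∫ x in I, |hfun x - A| := by
      apply mul_le_mul_of_nonneg_left osc (by positivity)
    have hh : (2 * ε)⁻¹ * (ε * A) = A / 2 := by
      field_simp
    rw [hh] at this
    have : C < A / 2 := by linarith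
    linarith
  exact hfinal

end
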